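/- Let F : [0,∞) → ℝ be a cumulative distribution function of a nonnegative random variable (F nondecreasing, F(0) = 0, F(t) → 1 as t → ∞), continuously differentiable on [0,∞), satisfying the renewal equation F(t) = 2t/(1+t)³ + ∫₀ᵗ 2/(1+(t−y))³ · F(y) dy for all t ≥ 0. Then t(1 − F(t)) → 1 as t → ∞. -/

import Mathlib

open MeasureTheory Filter Set

open intervalIntegral

lemma integ_kernel (T a b : ℝ) (ha : 0 ≤ a) (hab : a ≤ b) (hbT : b ≤ T) :
    ∫ t in a..b, 1/(1+T-t)^2 = 1/(1+T-b) - 1/(1+T-a) := by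
  have hpos : ∀ t ∈ Set.uIcc a b, (0:ℝ) < 1 + T - t := by
    intro t ht
    rw [Set.uIcc_of_le hab] at ht
    nlinarith [ht.2]
  have hderiv : ∀ t ∈ Set.uIcc a b,
      HasDerivAt (fun x => (1+T-x)⁻¹) (1/(1+T-t)^2) t := by
    intro t ht
    have h1 : HasDerivAt (fun x : ℝ => 1+T-x) (-1) t := by
      simpa using (hasDerivAt_id t).const_sub (1+T)
    have h2 := h1.inv (ne_of_gt (hpos t ht))
    refine h2.congr_deriv ?_
    ring
  have hint : IntervalIntegrable (fun t => 1/(1+T-t)^2) volume a b := by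
    apply ContinuousOn.intervalIntegrable
    apply ContinuousOn.div continuousOn_const
    · fun_prop
    · intro t ht
      exact pow_ne_zero _ (ne_of_gt (hpos t ht))
  have := intervalIntegral.integral_eq_sub_of_hasDerivAt hderiv hint
  rw [this]
  rw [one_div, one_div]

lemma integ_inv (a b : ℝ) (ha : 0 ≤ a) (hab : a ≤ b) :
    ∫ t in a..b, 1/(1+t) = Real.log (1+b) - Real.log (1+a) := by
  have hpos : ∀ t ∈ Set.uIcc a b, (0:ℝ) < 1 + t := by
    intro t ht
    rw [Set.uIcc_of_le hab] at ht
    nlinarith [ht.1]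
  have hderiv : ∀ t ∈ Set.uIcc a b,
      HasDerivAt (fun x => Real.log (1+x)) (1/(1+t)) t := by
    intro t ht
    have h1 : HasDerivAt (fun x : ℝ => 1+x) 1 t := by
      simpa using (hasDerivAt_id t).const_add 1
    have h2 := (Real.hasDerivAt_log (ne_of_gt (hpos t ht))).comp t h1
    simpa [one_div, Function.comp_def] using h2
  have hint : IntervalIntegrable (fun t => 1/(1+t)) volume a b := by
    apply ContinuousOn.intervalIntegrable
    apply ContinuousOn.div continuousOn_const (by fun_prop)
    intro t ht; exact ne_of_gt (hpos t ht)
  rw [intervalIntegral.integral_eq_sub_of_hasDerivAt hderiv hint]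

lemma integ_Ia (T : ℝ) (hT : 0 ≤ T) :
    ∫ t in (0:ℝ)..T, 2*t/(1+t)^3 = T^2/(1+T)^2 := by
  have hpos : ∀ t ∈ Set.uIcc (0:ℝ) T, (0:ℝ) < 1 + t := by
    intro t ht
    rw [Set.uIcc_of_le hT] at ht
    nlinarith [ht.1]
  have hderiv : ∀ t ∈ Set.uIcc (0:ℝ) T,
      HasDerivAt (fun x => ((1+x)^2)⁻¹ - 2*(1+x)⁻¹) (2*t/(1+t)^3) t := by
    intro t ht
    have h0 := hpos t ht
    have h1 : HasDerivAt (fun x : ℝ => 1+x) 1 t := by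
      simpa using (hasDerivAt_id t).const_add 1
    have h2 := ((h1.pow 2).inv (by exact pow_ne_zero _ (ne_of_gt h0))).sub (((h1.inv (ne_of_gt h0))).const_mul 2)
    refine h2.congr_deriv ?_
    simp only [Pi.pow_apply]
    field_simp
    ring
  have hint : IntervalIntegrable (fun t => 2*t/(1+t)^3) volume 0 T := by
    apply ContinuousOn.intervalIntegrable
    apply ContinuousOn.div (by fun_prop) (by fun_prop)
    intro t ht; exact pow_ne_zero _ (ne_of_gt (hpos t ht))
  rw [intervalIntegral.integral_eq_sub_of_hasDerivAt hderiv hint]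
  have h1 : (0:ℝ) < 1 + T := by linarith
  field_simp
  ring

lemma integ_Ib (y T : ℝ) (hy : 0 ≤ y) (hyT : y ≤ T) :
    ∫ t in y..T, 2/(1+(t-y))^3 = 1 - 1/(1+T-y)^2 := by
  have hpos : ∀ t ∈ Set.uIcc y T, (0:ℝ) < 1 + (t - y) := by
    intro t ht
    rw [Set.uIcc_of_le hyT] at ht
    nlinarith [ht.1]
  have hderiv : ∀ t ∈ Set.uIcc y T,
      HasDerivAt (fun x => -(((1+(x-y))^2)⁻¹)) (2/(1+(t-y))^3) t := by
    intro t ht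
    have h0 := hpos t ht
    have h1 : HasDerivAt (fun x : ℝ => 1+(x-y)) 1 t := by
      simpa using ((hasDerivAt_id t).sub_const y).const_add 1
    have h2 := (((h1.pow 2).inv (by exact pow_ne_zero _ (ne_of_gt h0)))).neg
    refine h2.congr_deriv ?_
    simp only [Pi.pow_apply]
    field_simp
    ring
  have hint : IntervalIntegrable (fun t => 2/(1+(t-y))^3) volume y T := by
    apply ContinuousOn.intervalIntegrable
    apply ContinuousOn.div (by fun_prop) (by fun_prop)
    intro t ht; exact pow_ne_zero _ (ne_of_gt (hpos t ht))
  rw [intervalIntegral.integral_eq_sub_of_hasDerivAt hderiv hint]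
  have h0 : (0:ℝ) < 1 + T - y := by linarith
  have : (1:ℝ) + (T - y) = 1 + T - y := by ring
  rw [this]
  field_simp
  ring

lemma triangle_swap (T : ℝ) (hT : 0 ≤ T) (k : ℝ → ℝ → ℝ)
    (hk : Continuous (Function.uncurry k)) :
    ∫ t in (0:ℝ)..T, ∫ y in (0:ℝ)..t, k t y = ∫ y in (0:ℝ)..T, ∫ t in y..T, k t y := by
  set S : Set (ℝ × ℝ) := {p | p.1 ∈ Ioc 0 T ∧ p.2 ∈ Ioc 0 p.1} with hS
  have hSm : MeasurableSet S := by
    have : S = ({p : ℝ × ℝ | 0 < p.1} ∩ {p | p.1 ≤ T}) ∩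
        ({p | 0 < p.2} ∩ {p | p.2 ≤ p.1}) := by
      ext p
      constructor
      · rintro ⟨⟨h1, h2⟩, ⟨h3, h4⟩⟩; exact ⟨⟨h1, h2⟩, ⟨h3, h4⟩⟩
      · rintro ⟨⟨h1, h2⟩, ⟨h3, h4⟩⟩; exact ⟨⟨h1, h2⟩, ⟨h3, h4⟩⟩
    rw [this]
    exact (((measurableSet_lt measurable_const measurable_fst).inter
      (measurableSet_le measurable_fst measurable_const)).inter
      ((measurableSet_lt measurable_const measurable_snd).inter
      (measurableSet_le measurable_snd measurable_fst)))
  have hInt : Integrable (S.indicator (Function.uncurry k)) (volume.prod volume) := by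
    rw [integrable_indicator_iff hSm]
    have hsub : S ⊆ Icc (0:ℝ) T ×ˢ Icc (0:ℝ) T := by
      rintro ⟨t, y⟩ ⟨ht, hy⟩
      exact ⟨⟨le_of_lt ht.1, ht.2⟩, ⟨le_of_lt hy.1, le_trans hy.2 ht.2⟩⟩
    have hcomp : IsCompact (Icc (0:ℝ) T ×ˢ Icc (0:ℝ) T) := isCompact_Icc.prod isCompact_Icc
    have h1 : IntegrableOn (Function.uncurry k) (Icc (0:ℝ) T ×ˢ Icc (0:ℝ) T)
        (volume.prod volume) := by
      rw [← Measure.volume_eq_prod]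
      exact hk.continuousOn.integrableOn_compact hcomp
    exact h1.mono_set hsub
  have hswap := MeasureTheory.integral_integral_swap
    (f := fun t y => S.indicator (Function.uncurry k) (t, y)) (μ := volume) (ν := volume)
    (by exact hInt)
  have h1 : ∀ t : ℝ, (∫ y, S.indicator (Function.uncurry k) (t, y)) =
      (Ioc (0:ℝ) T).indicator (fun t => ∫ y in Ioc 0 t, k t y) t := by
    intro t
    by_cases ht : t ∈ Ioc (0:ℝ) T
    · rw [Set.indicator_of_mem ht, ← MeasureTheory.integral_indicator measurableSet_Ioc]
      congr 1
      ext y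
      by_cases hy : y ∈ Ioc (0:ℝ) t
      · rw [Set.indicator_of_mem hy, Set.indicator_of_mem (show (t, y) ∈ S from ⟨ht, hy⟩)]
        rfl
      · rw [Set.indicator_of_notMem hy, Set.indicator_of_notMem (fun h => hy h.2)]
    · rw [Set.indicator_of_notMem ht]
      have : ∀ y : ℝ, S.indicator (Function.uncurry k) (t, y) = 0 :=
        fun y => Set.indicator_of_notMem (fun h => ht h.1) _
      simp [this]
  have h2 : ∀ y : ℝ, (∫ t, S.indicator (Function.uncurry k) (t, y)) =
      (Ioc (0:ℝ) T).indicator (fun y => ∫ t in Ioc y T, k t y) y := by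
    intro y
    by_cases hy : y ∈ Ioc (0:ℝ) T
    · rw [Set.indicator_of_mem hy]
      have heq : (fun t => S.indicator (Function.uncurry k) (t, y)) =
          (Icc y T).indicator (fun t => k t y) := by
        ext t
        by_cases ht : t ∈ Icc y T
        · rw [Set.indicator_of_mem ht,
            Set.indicator_of_mem (show (t, y) ∈ S from ⟨⟨lt_of_lt_of_le hy.1 ht.1, ht.2⟩, ⟨hy.1, ht.1⟩⟩)]
          rfl
        · rw [Set.indicator_of_notMem ht,
            Set.indicator_of_notMem (fun h => ht ⟨h.2.2, h.1.2⟩)]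
      rw [heq, MeasureTheory.integral_indicator measurableSet_Icc,
        MeasureTheory.integral_Icc_eq_integral_Ioc]
    · rw [Set.indicator_of_notMem hy]
      have : ∀ t : ℝ, S.indicator (Function.uncurry k) (t, y) = 0 := by
        intro t
        apply Set.indicator_of_notMem
        rintro ⟨ht, hyt⟩
        exact hy ⟨hyt.1, le_trans hyt.2 ht.2⟩
      simp [this]
  simp only [h1] at hswap
  simp only [h2] at hswap
  rw [MeasureTheory.integral_indicator measurableSet_Ioc,
    MeasureTheory.integral_indicator measurableSet_Ioc] at hswap
  rw [intervalIntegral.integral_of_le hT, intervalIntegral.integral_of_le hT]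
  calc ∫ t in Ioc (0:ℝ) T, ∫ y in (0:ℝ)..t, k t y
      = ∫ t in Ioc (0:ℝ) T, ∫ y in Ioc (0:ℝ) t, k t y := by
        apply MeasureTheory.setIntegral_congr_fun measurableSet_Ioc
        intro t ht
        exact intervalIntegral.integral_of_le (le_of_lt ht.1)
    _ = ∫ y in Ioc (0:ℝ) T, ∫ t in Ioc y T, k t y := hswap
    _ = ∫ y in Ioc (0:ℝ) T, ∫ t in y..T, k t y := by
        apply MeasureTheory.setIntegral_congr_fun measurableSet_Ioc
        intro y hy
        exact (intervalIntegral.integral_of_le hy.2).symm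

lemma key_identity (F : ℝ → ℝ) (hFc : ContinuousOn F (Ici 0))
    (hrenewal : ∀ t, 0 ≤ t →
      F t = 2 * t / (1 + t) ^ 3 + ∫ y in (0:ℝ)..t, 2 / (1 + (t - y)) ^ 3 * F y)
    (T : ℝ) (hT : 0 ≤ T) :
    ∫ t in (0:ℝ)..T, (1 - F t)/(1+T-t)^2 = T/(1+T)^2 := by
  set k : ℝ → ℝ → ℝ := fun t y => 2/(1 + max (t-y) 0)^3 * F (max y 0) with hkdef
  have hmax0 : Continuous (fun y : ℝ => max y 0) := continuous_id.max continuous_const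
  have hFmax : Continuous (fun y : ℝ => F (max y 0)) :=
    hFc.comp_continuous hmax0 (fun y => Set.mem_Ici.mpr (le_max_right _ _))
  have hk : Continuous (Function.uncurry k) := by
    have huk : Function.uncurry k =
        fun p : ℝ × ℝ => 2/(1 + max (p.1 - p.2) 0)^3 * F (max p.2 0) := rfl
    rw [huk]
    apply Continuous.mul
    · apply Continuous.div continuous_const
      · fun_prop
      · intro p
        have : (0:ℝ) ≤ max (p.1 - p.2) 0 := le_max_right _ _
        positivity
    · exact hFmax.comp continuous_snd
  -- integrability helpers
  have hIccIci : Set.Icc (0:ℝ) T ⊆ Set.Ici 0 := fun x hx => hx.1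
  have intF : IntervalIntegrable F volume 0 T := by
    apply ContinuousOn.intervalIntegrable
    rw [Set.uIcc_of_le hT]
    exact hFc.mono hIccIci
  have intG : IntervalIntegrable (fun t => 2*t/(1+t)^3) volume 0 T := by
    apply ContinuousOn.intervalIntegrable
    apply ContinuousOn.div (by fun_prop) (by fun_prop)
    intro t ht
    rw [Set.uIcc_of_le hT] at ht
    have : (0:ℝ) < 1 + t := by linarith [ht.1]
    positivity
  have hbpos : ∀ t ∈ Set.uIcc (0:ℝ) T, (0:ℝ) < 1 + T - t := by
    intro t ht
    rw [Set.uIcc_of_le hT] at ht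
    linarith [ht.2]
  have intb : IntervalIntegrable (fun t => 1/(1+T-t)^2) volume 0 T := by
    apply ContinuousOn.intervalIntegrable
    apply ContinuousOn.div continuousOn_const (by fun_prop)
    intro t ht
    exact pow_ne_zero _ (ne_of_gt (hbpos t ht))
  have intFb : IntervalIntegrable (fun t => F t/(1+T-t)^2) volume 0 T := by
    apply ContinuousOn.intervalIntegrable
    apply ContinuousOn.div
    · rw [Set.uIcc_of_le hT]; exact hFc.mono hIccIci
    · fun_prop
    · intro t ht
      exact pow_ne_zero _ (ne_of_gt (hbpos t ht))
  -- step 1 : rewrite renewal as inner integral of k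
  have hinner : ∀ t, 0 ≤ t → (∫ y in (0:ℝ)..t, k t y) = F t - 2*t/(1+t)^3 := by
    intro t ht
    have hcong : (∫ y in (0:ℝ)..t, k t y) = ∫ y in (0:ℝ)..t, 2/(1+(t-y))^3 * F y := by
      apply intervalIntegral.integral_congr
      intro y hy
      rw [Set.uIcc_of_le ht] at hy
      have h1 : max (t - y) 0 = t - y := max_eq_left (by linarith [hy.1, hy.2])
      have h2 : max y 0 = y := max_eq_left hy.1
      simp only [hkdef, h1, h2]
    rw [hcong]
    linarith [hrenewal t ht]
  have step1 : (∫ t in (0:ℝ)..T, (F t - 2*t/(1+t)^3)) =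
      ∫ t in (0:ℝ)..T, ∫ y in (0:ℝ)..t, k t y := by
    apply intervalIntegral.integral_congr
    intro t ht
    rw [Set.uIcc_of_le hT] at ht
    exact (hinner t ht.1).symm
  have step3 : (∫ y in (0:ℝ)..T, ∫ t in y..T, k t y) =
      ∫ y in (0:ℝ)..T, F y * (1 - 1/(1+T-y)^2) := by
    apply intervalIntegral.integral_congr
    intro y hy
    rw [Set.uIcc_of_le hT] at hy
    show (∫ t in y..T, k t y) = F y * (1 - 1/(1+T-y)^2)
    have hcong : (∫ t in y..T, k t y) = ∫ t in y..T, F y * (2/(1+(t-y))^3) := by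
      apply intervalIntegral.integral_congr
      intro t ht
      rw [Set.uIcc_of_le hy.2] at ht
      have h1 : max (t - y) 0 = t - y := max_eq_left (by linarith [ht.1])
      have h2 : max y 0 = y := max_eq_left hy.1
      simp only [hkdef, h1, h2]
      ring
    rw [hcong, intervalIntegral.integral_const_mul, integ_Ib y T hy.1 hy.2]
  have main : (∫ t in (0:ℝ)..T, F t) - T^2/(1+T)^2 =
      (∫ t in (0:ℝ)..T, F t) - ∫ t in (0:ℝ)..T, F t/(1+T-t)^2 := by
    calc (∫ t in (0:ℝ)..T, F t) - T^2/(1+T)^2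
        = (∫ t in (0:ℝ)..T, F t) - ∫ t in (0:ℝ)..T, 2*t/(1+t)^3 := by
          rw [integ_Ia T hT]
      _ = ∫ t in (0:ℝ)..T, (F t - 2*t/(1+t)^3) := (intervalIntegral.integral_sub intF intG).symm
      _ = ∫ y in (0:ℝ)..T, F y * (1 - 1/(1+T-y)^2) := by
          rw [step1, triangle_swap T hT k hk, step3]
      _ = ∫ y in (0:ℝ)..T, (F y - F y/(1+T-y)^2) := by
          apply intervalIntegral.integral_congr
          intro y hy
          ring
      _ = (∫ t in (0:ℝ)..T, F t) - ∫ t in (0:ℝ)..T, F t/(1+T-t)^2 :=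
          intervalIntegral.integral_sub intF intFb
  have hFb : (∫ t in (0:ℝ)..T, F t/(1+T-t)^2) = T^2/(1+T)^2 := by linarith
  have hsplit : (∫ t in (0:ℝ)..T, (1 - F t)/(1+T-t)^2) =
      (∫ t in (0:ℝ)..T, 1/(1+T-t)^2) - ∫ t in (0:ℝ)..T, F t/(1+T-t)^2 := by
    rw [← intervalIntegral.integral_sub intb intFb]
    apply intervalIntegral.integral_congr
    intro t ht
    ring
  rw [hsplit, hFb, integ_kernel T 0 T le_rfl hT le_rfl]
  have h1 : (0:ℝ) < 1 + T := by linarith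
  rw [show (1:ℝ)+T-T = 1 by ring, show (1:ℝ)+T-0 = 1+T by ring]
  field_simp
  ring

lemma Zb_int (F : ℝ → ℝ) (hFc : ContinuousOn F (Ici 0)) (T a b : ℝ)
    (ha : 0 ≤ a) (hab : a ≤ b) (hbT : b ≤ T) :
    IntervalIntegrable (fun t => (1 - F t)/(1+T-t)^2) volume a b := by
  apply ContinuousOn.intervalIntegrable
  rw [Set.uIcc_of_le hab]
  apply ContinuousOn.div
  · exact continuousOn_const.sub (hFc.mono (fun x hx => le_trans ha hx.1))
  · fun_prop
  · intro t ht
    have : (0:ℝ) < 1 + T - t := by nlinarith [ht.2]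
    positivity

lemma cb_int (T a b c : ℝ) (hab : a ≤ b) (hbT : b ≤ T) (haT : 0 ≤ a) :
    IntervalIntegrable (fun t => c/(1+T-t)^2) volume a b := by
  apply ContinuousOn.intervalIntegrable
  rw [Set.uIcc_of_le hab]
  apply ContinuousOn.div continuousOn_const (by fun_prop)
  intro t ht
  have : (0:ℝ) < 1 + T - t := by nlinarith [ht.2]
  positivity

lemma upper_b (F : ℝ → ℝ)
    (hmono : ∀ a b : ℝ, 0 ≤ a → a ≤ b → F a ≤ F b)
    (hFc : ContinuousOn F (Ici 0))
    (key : ∀ T, 0 ≤ T → (∫ t in (0:ℝ)..T, (1 - F t)/(1+T-t)^2) = T/(1+T)^2) :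
    ∀ T, 0 < T → 1 - F T ≤ 1/(1+T) := by
  intro T hT
  have hTnn := le_of_lt hT
  have hT1 : (0:ℝ) < 1 + T := by linarith
  have h1 : (∫ t in (0:ℝ)..T, (1 - F T)/(1+T-t)^2) ≤
      ∫ t in (0:ℝ)..T, (1 - F t)/(1+T-t)^2 := by
    apply intervalIntegral.integral_mono_on hTnn
      (cb_int T 0 T (1 - F T) hTnn le_rfl le_rfl) (Zb_int F hFc T 0 T le_rfl hTnn le_rfl)
    intro t ht
    have hc : (0:ℝ) < 1 + T - t := by nlinarith [ht.2]
    have h := hmono t T ht.1 ht.2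
    exact (div_le_div_iff_of_pos_right (by positivity)).mpr (by linarith)
  have h2 : (∫ t in (0:ℝ)..T, (1 - F T)/(1+T-t)^2) = (1 - F T) * (T/(1+T)) := by
    have he : (fun t => (1 - F T)/(1+T-t)^2) = fun t => (1 - F T) * (1/(1+T-t)^2) := by
      ext t; ring
    rw [he, intervalIntegral.integral_const_mul, integ_kernel T 0 T le_rfl hTnn le_rfl]
    field_simp
    rw [show (1:ℝ) + T - T = 1 by ring, show (1:ℝ) + T - 0 = 1 + T by ring]
    field_simp
    ring
  rw [key T hTnn, h2] at h1
  have hq : (0:ℝ) < T/(1+T) := by positivity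
  have := (div_le_div_iff_of_pos_right hq).mpr h1
  calc 1 - F T = ((1 - F T) * (T/(1+T)))/(T/(1+T)) := by field_simp
    _ ≤ (T/(1+T)^2)/(T/(1+T)) := this
    _ = 1/(1+T) := by field_simp

lemma lower_b (F : ℝ → ℝ)
    (hmono : ∀ a b : ℝ, 0 ≤ a → a ≤ b → F a ≤ F b)
    (hFc : ContinuousOn F (Ici 0))
    (hub : ∀ t, 0 ≤ t → 1 - F t ≤ 1/(1+t))
    (key : ∀ T, 0 ≤ T → (∫ t in (0:ℝ)..T, (1 - F t)/(1+T-t)^2) = T/(1+T)^2) :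
    ∀ A, 1 ≤ A → ∀ T, 2*A+2 ≤ T →
      T/(1+T)^2 ≤ Real.log (1+T/2)/(1+T/2)^2 + 1/((1+A)*(1+T/2))
        + (1 - F (T-A)) * (A/(1+A)) := by
  intro A hA T hT
  have h0h : (0:ℝ) ≤ T/2 := by linarith
  have hhA : T/2 ≤ T - A := by linarith
  have hAT : T - A ≤ T := by linarith
  have hTnn : (0:ℝ) ≤ T := by linarith
  have hA1 : (0:ℝ) < 1 + A := by linarith
  have hTh1 : (0:ℝ) < 1 + T/2 := by linarith
  -- split
  have hsplit : (∫ t in (0:ℝ)..T, (1 - F t)/(1+T-t)^2) =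
      (∫ t in (0:ℝ)..(T/2), (1 - F t)/(1+T-t)^2)
      + (∫ t in (T/2)..(T-A), (1 - F t)/(1+T-t)^2)
      + (∫ t in (T-A)..T, (1 - F t)/(1+T-t)^2) := by
    rw [intervalIntegral.integral_add_adjacent_intervals
      (Zb_int F hFc T 0 (T/2) le_rfl h0h (by linarith))
      (Zb_int F hFc T (T/2) (T-A) h0h hhA hAT),
      intervalIntegral.integral_add_adjacent_intervals
      (Zb_int F hFc T 0 (T-A) le_rfl (by linarith) hAT)
      (Zb_int F hFc T (T-A) T (by linarith) hAT le_rfl)]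
  -- I1
  have hI1 : (∫ t in (0:ℝ)..(T/2), (1 - F t)/(1+T-t)^2) ≤ Real.log (1+T/2)/(1+T/2)^2 := by
    have hle : (∫ t in (0:ℝ)..(T/2), (1 - F t)/(1+T-t)^2) ≤
        ∫ t in (0:ℝ)..(T/2), (1/(1+t)) * (1/(1+T/2)^2) := by
      apply intervalIntegral.integral_mono_on h0h
        (Zb_int F hFc T 0 (T/2) le_rfl h0h (by linarith))
        (by
          apply ContinuousOn.intervalIntegrable
          apply ContinuousOn.mul _ continuousOn_const
          apply ContinuousOn.div continuousOn_const (by fun_prop)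
          intro t ht
          rw [Set.uIcc_of_le h0h] at ht
          nlinarith [ht.1])
      intro t ht
      have ht0 : (0:ℝ) ≤ t := ht.1
      have htT : t ≤ T/2 := ht.2
      have h1t : (0:ℝ) < 1 + t := by linarith
      have hd : (0:ℝ) < 1 + T - t := by linarith
      have hdd : (1+T/2)^2 ≤ (1+T-t)^2 := by nlinarith
      calc (1 - F t)/(1+T-t)^2 ≤ (1/(1+t))/(1+T/2)^2 :=
            div_le_div₀ (by positivity) (hub t ht0) (by positivity) hdd
        _ = (1/(1+t)) * (1/(1+T/2)^2) := by ring
    rw [intervalIntegral.integral_mul_const, integ_inv 0 (T/2) le_rfl h0h] at hle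
    calc (∫ t in (0:ℝ)..(T/2), (1 - F t)/(1+T-t)^2)
        ≤ (Real.log (1+T/2) - Real.log (1+0)) * (1/(1+T/2)^2) := hle
      _ = Real.log (1+T/2)/(1+T/2)^2 := by
          norm_num [div_eq_mul_inv]
  -- I2
  have hI2 : (∫ t in (T/2)..(T-A), (1 - F t)/(1+T-t)^2) ≤ 1/((1+A)*(1+T/2)) := by
    have hle : (∫ t in (T/2)..(T-A), (1 - F t)/(1+T-t)^2) ≤
        ∫ t in (T/2)..(T-A), (1/(1+T/2))/(1+T-t)^2 := by
      apply intervalIntegral.integral_mono_on hhA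
        (Zb_int F hFc T (T/2) (T-A) h0h hhA hAT)
        (cb_int T (T/2) (T-A) (1/(1+T/2)) hhA hAT h0h)
      intro t ht
      have ht0 : T/2 ≤ t := ht.1
      have hd : (0:ℝ) < 1 + T - t := by nlinarith [ht.2]
      apply (div_le_div_iff_of_pos_right (by positivity : (0:ℝ) < (1+T-t)^2)).mpr
      calc 1 - F t ≤ 1/(1+t) := hub t (by linarith)
        _ ≤ 1/(1+T/2) := by
            apply one_div_le_one_div_of_le hTh1
            linarith
    have heq : (∫ t in (T/2)..(T-A), (1/(1+T/2))/(1+T-t)^2) =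
        (1/(1+T/2)) * (1/(1+A) - 1/(1+T/2)) := by
      have he : (fun t => (1/(1+T/2))/(1+T-t)^2) =
          fun t => (1/(1+T/2)) * (1/(1+T-t)^2) := by ext t; ring
      rw [he, intervalIntegral.integral_const_mul, integ_kernel T (T/2) (T-A) h0h hhA hAT]
      have e1 : 1 + T - (T - A) = 1 + A := by ring
      have e2 : 1 + T - T/2 = 1 + T/2 := by ring
      rw [e1, e2]
    rw [heq] at hle
    calc (∫ t in (T/2)..(T-A), (1 - F t)/(1+T-t)^2)
        ≤ (1/(1+T/2)) * (1/(1+A) - 1/(1+T/2)) := hle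
      _ ≤ (1/(1+T/2)) * (1/(1+A)) := by
          apply mul_le_mul_of_nonneg_left _ (by positivity)
          have : (0:ℝ) < 1/(1+T/2) := by positivity
          linarith
      _ = 1/((1+A)*(1+T/2)) := by field_simp
  -- I3
  have hI3 : (∫ t in (T-A)..T, (1 - F t)/(1+T-t)^2) ≤ (1 - F (T-A)) * (A/(1+A)) := by
    have hle : (∫ t in (T-A)..T, (1 - F t)/(1+T-t)^2) ≤
        ∫ t in (T-A)..T, (1 - F (T-A))/(1+T-t)^2 := by
      apply intervalIntegral.integral_mono_on hAT
        (Zb_int F hFc T (T-A) T (by linarith) hAT le_rfl)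
        (cb_int T (T-A) T (1 - F (T-A)) hAT le_rfl (by linarith))
      intro t ht
      have hd : (0:ℝ) < 1 + T - t := by nlinarith [ht.2]
      apply (div_le_div_iff_of_pos_right (by positivity : (0:ℝ) < (1+T-t)^2)).mpr
      linarith [hmono (T-A) t (by linarith [ht.1]) ht.1]
    have heq : (∫ t in (T-A)..T, (1 - F (T-A))/(1+T-t)^2) =
        (1 - F (T-A)) * (A/(1+A)) := by
      have he : (fun t => (1 - F (T-A))/(1+T-t)^2) =
          fun t => (1 - F (T-A)) * (1/(1+T-t)^2) := by ext t; ring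
      rw [he, intervalIntegral.integral_const_mul,
        integ_kernel T (T-A) T (by linarith) hAT le_rfl]
      have e1 : 1 + T - (T - A) = 1 + A := by ring
      have e2 : 1 + T - T = 1 := by ring
      rw [e1, e2]
      congr 1
      field_simp
      ring
    rw [heq] at hle
    exact hle
  rw [← key T hTnn]
  rw [hsplit]
  linarith [hI1, hI2, hI3]

lemma ratio_lim (c d : ℝ) : Tendsto (fun s : ℝ => (s+c)/(s+d)) atTop (nhds 1) := by
  have h1 : Tendsto (fun s : ℝ => s + d) atTop atTop :=
    tendsto_atTop_add_const_right _ d tendsto_id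
  have h2 : Tendsto (fun s : ℝ => 1 + (c-d)*(s+d)⁻¹) atTop (nhds (1 + (c-d)*0)) :=
    tendsto_const_nhds.add ((tendsto_inv_atTop_zero.comp h1).const_mul _)
  have h3 : (fun s : ℝ => 1 + (c-d)*(s+d)⁻¹) =ᶠ[atTop] fun s => (s+c)/(s+d) := by
    filter_upwards [eventually_gt_atTop (-d)] with s hs
    have hne : s + d ≠ 0 := by intro h; rw [← neg_eq_of_add_eq_zero_left h] at hs; linarith
    field_simp
    ring
  simpa using h2.congr' h3

lemma half_lim (A : ℝ) : Tendsto (fun s : ℝ => s/(1+(s+A)/2)) atTop (nhds 2) := by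
  have h2 : Tendsto (fun s : ℝ => 2*((s+0)/(s+(2+A)))) atTop (nhds (2*1)) :=
    (ratio_lim 0 (2+A)).const_mul 2
  have h3 : ∀ s : ℝ, 2*((s+0)/(s+(2+A))) = s/(1+(s+A)/2) := by
    intro s
    rw [show (1:ℝ)+(s+A)/2 = (s+(2+A))/2 by ring, div_div_eq_mul_div]
    ring
  simpa using h2.congr h3

lemma term1_lim (A : ℝ) :
    Tendsto (fun s : ℝ => s*((s+A)/(1+(s+A))^2)) atTop (nhds 1) := by
  have h2 : Tendsto (fun s : ℝ => ((s+0)/(s+(1+A))) * ((s+A)/(s+(1+A))))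
      atTop (nhds (1*1)) := (ratio_lim 0 (1+A)).mul (ratio_lim A (1+A))
  have h3 : ∀ s : ℝ, ((s+0)/(s+(1+A))) * ((s+A)/(s+(1+A))) = s*((s+A)/(1+(s+A))^2) := by
    intro s
    rw [show (1:ℝ)+(s+A) = s+(1+A) by ring, div_mul_div_comm, ← sq, mul_div_assoc']
    ring
  simpa using h2.congr h3

lemma term2_lim (A : ℝ) :
    Tendsto (fun s : ℝ => s*(Real.log (1+(s+A)/2)/(1+(s+A)/2)^2)) atTop (nhds 0) := by
  have hx : Tendsto (fun s : ℝ => 1+(s+A)/2) atTop atTop := by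
    apply tendsto_atTop_add_const_left
    exact (tendsto_atTop_add_const_right _ A tendsto_id).atTop_div_const two_pos
  have hlog : Tendsto (fun x : ℝ => Real.log x / x) atTop (nhds 0) :=
    Real.isLittleO_log_id_atTop.tendsto_div_nhds_zero
  have h2 : Tendsto (fun s : ℝ => (s/(1+(s+A)/2)) *
      (Real.log (1+(s+A)/2)/(1+(s+A)/2))) atTop (nhds (2*0)) :=
    (half_lim A).mul (hlog.comp hx)
  have h3 : ∀ s : ℝ, (s/(1+(s+A)/2)) * (Real.log (1+(s+A)/2)/(1+(s+A)/2)) =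
      s*(Real.log (1+(s+A)/2)/(1+(s+A)/2)^2) := by
    intro s
    rw [div_mul_div_comm, ← sq, mul_div_assoc']
  simpa using h2.congr h3

lemma term3_lim (A : ℝ) :
    Tendsto (fun s : ℝ => s*(1/((1+A)*(1+(s+A)/2)))) atTop (nhds (2/(1+A))) := by
  have h2 : Tendsto (fun s : ℝ => (s/(1+(s+A)/2))/(1+A)) atTop (nhds (2/(1+A))) :=
    (half_lim A).div_const (1+A)
  have h3 : ∀ s : ℝ, (s/(1+(s+A)/2))/(1+A) = s*(1/((1+A)*(1+(s+A)/2))) := by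
    intro s
    rw [div_div, mul_one_div]
    ring_nf
  exact h2.congr h3

/-- For the CDF `F` solving the renewal equation, `t(1 - F(t)) → 1` as `t → ∞`. -/
theorem tail_asymptotic
    (F F' : ℝ → ℝ)
    (hmono : ∀ a b : ℝ, 0 ≤ a → a ≤ b → F a ≤ F b)
    (hzero : F 0 = 0)
    (hlim : Filter.Tendsto F atTop (nhds 1))
    (hderiv : ∀ t, 0 ≤ t → HasDerivWithinAt F (F' t) (Ici 0) t)
    (hcont : ContinuousOn F' (Ici 0))
    (hrenewal : ∀ t, 0 ≤ t →
      F t = 2 * t / (1 + t) ^ 3 + ∫ y in (0:ℝ)..t, 2 / (1 + (t - y)) ^ 3 * F y) :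
    Filter.Tendsto (fun t : ℝ => t * (1 - F t)) atTop (nhds 1) := by
  have hFc : ContinuousOn F (Ici 0) := fun t ht => (hderiv t ht).continuousWithinAt
  have key : ∀ T, 0 ≤ T → (∫ t in (0:ℝ)..T, (1 - F t)/(1+T-t)^2) = T/(1+T)^2 :=
    fun T hT => key_identity F hFc hrenewal T hT
  have hub0 := upper_b F hmono hFc key
  have hub : ∀ t, 0 ≤ t → 1 - F t ≤ 1/(1+t) := by
    intro t ht
    rcases lt_or_eq_of_le ht with h | h
    · exact hub0 t h
    · rw [← h, hzero]; norm_num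
  have hlow := lower_b F hmono hFc hub key
  rw [Metric.tendsto_nhds]
  intro ε hε
  set A : ℝ := max 1 (2/ε) with hAdef
  have hA1 : 1 ≤ A := le_max_left _ _
  have hA0 : (0:ℝ) < A := lt_of_lt_of_le one_pos hA1
  have hAε : 1/A < ε := by
    rcases le_or_gt ε 2 with h | h
    · have h2 : 2/ε ≤ A := le_max_right _ _
      have h3 : (0:ℝ) < 2/ε := by positivity
      calc 1/A ≤ 1/(2/ε) := one_div_le_one_div_of_le h3 h2
        _ = ε/2 := by rw [one_div_div]
        _ < ε := by linarith
    · calc 1/A ≤ 1 := by rw [div_le_one hA0]; exact hA1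
        _ < 2 := one_lt_two
        _ < ε := h
  -- lower-bound function
  set L : ℝ → ℝ := fun s => ((1+A)/A) * (s*((s+A)/(1+(s+A))^2)
      - s*(Real.log (1+(s+A)/2)/(1+(s+A)/2)^2) - s*(1/((1+A)*(1+(s+A)/2)))) with hLdef
  have hA1pos : (0:ℝ) < 1 + A := by linarith
  have hLlim : Tendsto L atTop (nhds (((1+A)/A) * (1 - 0 - 2/(1+A)))) := by
    apply Tendsto.const_mul
    exact ((term1_lim A).sub (term2_lim A)).sub (term3_lim A)
  have hgt : 1 - ε < ((1+A)/A) * (1 - 0 - 2/(1+A)) := by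
    have : ((1+A)/A) * (1 - 0 - 2/(1+A)) = 1 - 1/A := by
      field_simp
      ring
    rw [this]
    linarith
  have hev1 : ∀ᶠ s in atTop, 1 - ε < L s := hLlim.eventually (eventually_gt_nhds hgt)
  have hev2 : ∀ᶠ s in atTop, L s ≤ s * (1 - F s) := by
    filter_upwards [eventually_ge_atTop (A+2)] with s hs
    have hs0 : (0:ℝ) ≤ s := by linarith
    have hT : 2*A+2 ≤ s+A := by linarith
    have h := hlow A hA1 (s+A) hT
    rw [show s+A-A = s by ring] at h
    have e1 : 1 + (s+A)/2 = 1+(s+A)/2 := rfl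
    -- rewrite h's terms to match L
    have hb : (s+A)/(1+(s+A))^2 - Real.log (1+(s+A)/2)/(1+(s+A)/2)^2
        - 1/((1+A)*(1+(s+A)/2)) ≤ (1 - F s)*(A/(1+A)) := by
      have e2 : (s+A)/2 = (s+A)/2 := rfl
      linarith [h]
    have hc : (0:ℝ) ≤ ((1+A)/A) * s := by positivity
    calc L s = ((1+A)/A) * s * ((s+A)/(1+(s+A))^2
          - Real.log (1+(s+A)/2)/(1+(s+A)/2)^2 - 1/((1+A)*(1+(s+A)/2))) := by
          rw [hLdef]; ring
      _ ≤ ((1+A)/A) * s * ((1 - F s)*(A/(1+A))) := mul_le_mul_of_nonneg_left hb hc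
      _ = s * (1 - F s) := by field_simp
  filter_upwards [hev1, hev2, eventually_ge_atTop (1:ℝ)] with s h1 h2 hs1
  have hs0 : (0:ℝ) ≤ s := by linarith
  have hupper : s * (1 - F s) ≤ 1 := by
    calc s * (1 - F s) ≤ s * (1/(1+s)) := by
          apply mul_le_mul_of_nonneg_left (hub s hs0) hs0
      _ = s/(1+s) := by ring
      _ ≤ 1 := by
          rw [div_le_one (by linarith : (0:ℝ) < 1+s)]
          linarith
  rw [Real.dist_eq, abs_sub_lt_iff]
  constructor
  · linarith
  · linarith
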